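/- Let m ≥ 1 and k ≥ 1 be integers and let ω ∈ ℂ be a primitive m-th root of unity. Define b_1, …, b_m ∈ ℂ as the coefficients of the polynomial ∏_{j=1}^{m} (z − ω^{−kj}(ω^j − 1)) = ∑_{j=1}^{m} b_j z^j (the constant coefficient is 0). Then for every x ∈ ℂ, (−1)^{k(m−1)} · ∑_{j=1}^{m} b_j · x^j · (1+x)^{r_j} = (x+1)^m − 1, where r_j denotes the least nonnegative residue of −kj modulo m. -/

import Mathlib

open Finset Polynomial

lemma prod_shift_aux (m : ℕ) (g : ℕ → ℂ) (hg : ∀ i, g (i + m) = g i) :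
    ∀ t, ∏ i ∈ Finset.range m, g (i + t) = ∏ i ∈ Finset.range m, g i := by
  rcases Nat.eq_zero_or_pos m with rfl | hm
  · simp
  intro t
  induction t with
  | zero => simp
  | succ t ih =>
    have h1 := Finset.prod_range_succ' (fun i => g (i + t)) m
    have h2 := Finset.prod_range_succ (fun i => g (i + t)) m
    have hmt : g (m + t) = g (0 + t) := by
      rw [Nat.add_comm m t]; rw [hg]; simp
    have key : (∏ i ∈ Finset.range m, g (i + 1 + t)) * g (0 + t)
        = (∏ i ∈ Finset.range m, g (i + t)) * g (0 + t) := by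
      rw [← h1, h2, hmt]
    have hstep : (∏ i ∈ Finset.range m, g (i + 1 + t)) = ∏ i ∈ Finset.range m, g (i + t) := by
      by_cases h0 : g (0 + t) = 0
      · rw [Finset.prod_eq_zero (Finset.mem_range.mpr (Nat.sub_lt hm Nat.one_pos) : m - 1 ∈ Finset.range m),
            Finset.prod_eq_zero (Finset.mem_range.mpr hm : 0 ∈ Finset.range m)]
        · exact h0
        · have h3 : m - 1 + 1 + t = m + t := by omega
          rw [h3, Nat.add_comm m t, hg]; simpa using h0
      · exact mul_right_cancel₀ h0 key
    calc ∏ i ∈ Finset.range m, g (i + (t + 1))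
        = ∏ i ∈ Finset.range m, g (i + 1 + t) := by
          refine Finset.prod_congr rfl fun i _ => by rw [show i + (t+1) = i + 1 + t by omega]
      _ = ∏ i ∈ Finset.range m, g (i + t) := hstep
      _ = ∏ i ∈ Finset.range m, g i := ih

lemma zpow_sum_aux (z : ℂ) (hz : z ≠ 0) (s : Finset ℕ) (f : ℕ → ℤ) :
    ∏ i ∈ s, z ^ f i = z ^ (∑ i ∈ s, f i) := by
  classical
  induction s using Finset.cons_induction with
  | empty => simp
  | cons a s ha ih => rw [Finset.prod_cons, Finset.sum_cons, zpow_add₀ hz, ih]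

theorem stmt5 (m k : ℕ) (hm : 1 ≤ m) (hk : 1 ≤ k) (ω : ℂ) (hω : IsPrimitiveRoot ω m)
    (b : ℕ → ℂ)
    (hb : ∀ X : ℂ, ∏ j ∈ Finset.Icc 1 m, (X - ω ^ (-(k * j : ℤ)) * (ω ^ j - 1))
        = ∑ j ∈ Finset.Icc 1 m, b j * X ^ j)
    (x : ℂ) :
    (-1 : ℂ) ^ (k * (m - 1)) * ∑ j ∈ Finset.Icc 1 m,
        b j * x ^ j * (1 + x) ^ ((-(k * j : ℤ)) % (m : ℤ)).toNat
      = (x + 1) ^ m - 1 := by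
  classical
  have hm0 : 0 < m := hm
  have hω0 : ω ≠ 0 := hω.ne_zero (by omega)
  have hωm : (ω : ℂ) ^ m = 1 := hω.pow_eq_one
  have hcong : ∀ a c : ℤ, (m : ℤ) ∣ (a - c) → ω ^ a = ω ^ c := by
    rintro a c ⟨e, he⟩
    have h : a = c + (m : ℤ) * e := by linarith
    rw [h, zpow_add₀ hω0, zpow_mul, zpow_natCast, hωm, one_zpow, mul_one]
  set r : ℕ → ℕ := fun j => ((-(k * j : ℤ)) % (m : ℤ)).toNat with hrdef
  have hrcast : ∀ j, (r j : ℤ) = (-(k * j : ℤ)) % (m : ℤ) := fun j =>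
    Int.toNat_of_nonneg (Int.emod_nonneg _ (by exact_mod_cast hm0.ne'))
  have hrlt : ∀ j, r j < m := by
    intro j
    have h1 := Int.emod_lt_of_pos (-(k * j : ℤ)) (by exact_mod_cast hm0 : (0 : ℤ) < (m : ℤ))
    have h2 := hrcast j
    omega
  have hrdvd : ∀ j : ℕ, (m : ℤ) ∣ ((r j : ℤ) - (-(k * j : ℤ))) := by
    intro j
    have h := Int.mul_ediv_add_emod (-(k * j : ℤ)) (m : ℤ)
    exact ⟨-((-(k * j : ℤ)) / (m : ℤ)), by rw [hrcast]; linarith⟩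
  -- definitions
  set d : ℕ → ℂ := fun i => (x + ω ^ (-(k * i : ℤ))) * ω ^ (((k : ℤ) - 1) * i) with hddef
  set L : ℂ := ∏ i ∈ Finset.Icc 1 m, (-(ω ^ ((1 - (k : ℤ)) * i))) with hLdef
  set M : Polynomial ℂ := ∏ i ∈ Finset.Icc 1 m, (Polynomial.X - Polynomial.C (d i)) with hMdef
  set A : Polynomial ℂ := ∑ j ∈ Finset.Icc 1 m,
      Polynomial.C (b j * x ^ j) * Polynomial.X ^ (r j) with hAdef
  set R : Polynomial ℂ := Polynomial.C L * (M - Polynomial.X ^ m) + Polynomial.C L - A with hRdef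
  -- degrees
  have hMmonic : M.Monic := monic_prod_of_monic _ _ fun i _ => monic_X_sub_C (d i)
  have hMdeg : M.natDegree = m := by
    rw [hMdef, natDegree_prod _ _ fun i _ => X_sub_C_ne_zero (d i)]
    simp only [natDegree_X_sub_C, Finset.sum_const, smul_eq_mul, mul_one, Nat.card_Icc]
    omega
  have hsub_deg : (M - Polynomial.X ^ m).degree < ((m : ℕ) : WithBot ℕ) := by
    have h1 : M.degree = (Polynomial.X ^ m : Polynomial ℂ).degree := by
      rw [degree_X_pow, degree_eq_natDegree hMmonic.ne_zero, hMdeg]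
    have h2 := degree_sub_lt h1 hMmonic.ne_zero (by
      rw [hMmonic.leadingCoeff, leadingCoeff_X_pow])
    rwa [degree_eq_natDegree hMmonic.ne_zero, hMdeg] at h2
  have hAdeg : A.degree < ((m : ℕ) : WithBot ℕ) := by
    refine lt_of_le_of_lt (degree_sum_le _ _) ?_
    rw [Finset.sup_lt_iff (by exact_mod_cast WithBot.bot_lt_coe m)]
    intro j hj
    refine lt_of_le_of_lt (degree_C_mul_X_pow_le _ _) ?_
    exact_mod_cast hrlt j
  have hRdeg : R.natDegree < m := by
    by_cases hR0 : R = 0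
    · rw [hR0]; simpa using hm0
    rw [natDegree_lt_iff_degree_lt hR0]
    rw [hRdef]
    refine lt_of_le_of_lt (degree_sub_le _ _) (max_lt ?_ hAdeg)
    refine lt_of_le_of_lt (degree_add_le _ _) (max_lt ?_ ?_)
    · refine lt_of_le_of_lt (degree_mul_le _ _) ?_
      calc (Polynomial.C L).degree + (M - Polynomial.X ^ m).degree
          ≤ 0 + (M - Polynomial.X ^ m).degree := by
            exact add_le_add degree_C_le le_rfl
        _ = (M - Polynomial.X ^ m).degree := by rw [zero_add]
        _ < ((m : ℕ) : WithBot ℕ) := hsub_deg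
    · exact lt_of_le_of_lt degree_C_le (by exact_mod_cast hm0)
  -- interval-to-range conversion
  have hIcc : ∀ f : ℕ → ℂ, ∏ i ∈ Finset.Icc 1 m, f i = ∏ i ∈ Finset.range m, f (1 + i) := by
    intro f
    rw [← Finset.Ico_add_one_right_eq_Icc, Finset.prod_Ico_eq_prod_range]
    simp
  -- evaluation at roots of unity
  have heval : ∀ t : ℕ, R.eval (ω ^ t) = 0 := by
    intro t
    have hym : ((ω : ℂ) ^ t) ^ m = 1 := by
      rw [← pow_mul, mul_comm, pow_mul, hωm, one_pow]
    set G : ℕ → ℂ := fun j => x * ω ^ (-(k * t : ℤ)) - ω ^ (-(k * j : ℤ)) * (ω ^ j - 1)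
      with hGdef
    have hGper : ∀ i, G (i + m) = G i := by
      intro i
      have h1 : ω ^ (-((k : ℤ) * ((i + m : ℕ) : ℤ))) = ω ^ (-((k : ℤ) * (i : ℤ))) := by
        apply hcong
        exact ⟨-(k : ℤ), by push_cast; ring⟩
      simp only [hGdef, h1, pow_add, hωm, mul_one]
    have hprod1 : L * ∏ i ∈ Finset.Icc 1 m, ((ω ^ t) - d i)
        = ∏ i ∈ Finset.Icc 1 m, (ω ^ ((k * t : ℕ) : ℤ) * G (i + t)) := by
      rw [hLdef, ← Finset.prod_mul_distrib]
      refine Finset.prod_congr rfl fun i _ => ?_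
      simp only [hGdef, hddef]
      set P : ℂ := ω ^ i with hP
      set T : ℂ := ω ^ t with hT
      set p : ℂ := ω ^ (-(k * i : ℤ)) with hp
      set Q : ℂ := ω ^ (-(k * t : ℤ)) with hQ
      have hPne : P ≠ 0 := pow_ne_zero _ hω0
      have hTne : T ≠ 0 := pow_ne_zero _ hω0
      have hpne : p ≠ 0 := zpow_ne_zero _ hω0
      have hQne : Q ≠ 0 := zpow_ne_zero _ hω0
      have f1 : ω ^ ((1 - (k : ℤ)) * i) = P * p := by
        rw [hP, hp, ← zpow_natCast ω i, ← zpow_add₀ hω0]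
        congr 1; push_cast; ring
      have f2 : ω ^ (((k : ℤ) - 1) * i) = (P * p)⁻¹ := by
        rw [show ((k : ℤ) - 1) * i = -((1 - (k : ℤ)) * i) by ring, zpow_neg, f1]
      have f3 : ω ^ ((k * t : ℕ) : ℤ) = Q⁻¹ := by
        rw [hQ, show ((k * t : ℕ) : ℤ) = -(-(k * t : ℤ)) by push_cast; ring, zpow_neg]
      have f4 : ω ^ (-((k : ℤ) * ((i + t : ℕ) : ℤ))) = p * Q := by
        rw [hp, hQ, ← zpow_add₀ hω0]
        congr 1; push_cast; ring
      have f5 : (ω : ℂ) ^ (i + t) = P * T := pow_add ω i t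
      rw [f1, f2, f3, f4, f5]
      field_simp
      ring
    have hprod2 : ∏ i ∈ Finset.Icc 1 m, (ω ^ ((k * t : ℕ) : ℤ) * G (i + t))
        = ∏ j ∈ Finset.Icc 1 m, G j := by
      rw [Finset.prod_mul_distrib, Finset.prod_const]
      have hc : (ω ^ ((k * t : ℕ) : ℤ)) ^ m = 1 := by
        rw [zpow_natCast, ← pow_mul, mul_comm, pow_mul, hωm, one_pow]
      have hcard : #(Finset.Icc 1 m) = m := by rw [Nat.card_Icc]; omega
      rw [hcard, hc, one_mul]
      rw [hIcc fun i => G (i + t), hIcc G]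
      calc ∏ i ∈ Finset.range m, G (1 + i + t)
          = ∏ i ∈ Finset.range m, G (i + (1 + t)) := by
            refine Finset.prod_congr rfl fun i _ => by rw [show 1 + i + t = i + (1 + t) by omega]
        _ = ∏ i ∈ Finset.range m, G i := prod_shift_aux m G hGper (1 + t)
        _ = ∏ i ∈ Finset.range m, G (i + 1) := (prod_shift_aux m G hGper 1).symm
        _ = ∏ i ∈ Finset.range m, G (1 + i) := by
            refine Finset.prod_congr rfl fun i _ => by rw [Nat.add_comm]
    have hA' : A.eval (ω ^ t) = ∏ j ∈ Finset.Icc 1 m, G j := by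
      have hevalA : A.eval (ω ^ t)
          = ∑ j ∈ Finset.Icc 1 m, (b j * x ^ j) * (ω ^ t) ^ (r j) := by
        simp [hAdef, eval_finset_sum]
      have hsumA : ∑ j ∈ Finset.Icc 1 m, (b j * x ^ j) * (ω ^ t) ^ (r j)
          = ∑ j ∈ Finset.Icc 1 m, b j * (x * ω ^ (-(k * t : ℤ))) ^ j := by
        refine Finset.sum_congr rfl fun j _ => ?_
        have h1 : ((ω : ℂ) ^ t) ^ (r j) = (ω ^ (-(k * t : ℤ))) ^ j := by
          rw [← pow_mul, ← zpow_natCast ω (t * r j), ← zpow_natCast (ω ^ (-(k * t : ℤ))) j,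
            ← zpow_mul]
          apply hcong
          obtain ⟨c, hc⟩ := hrdvd j
          refine ⟨(t : ℤ) * c, ?_⟩
          have h2 : (r j : ℤ) = -(k * j : ℤ) + (m : ℤ) * c := by linarith
          push_cast
          rw [h2]; ring
        rw [mul_pow, h1]; ring
      rw [hevalA, hsumA, ← hb (x * ω ^ (-(k * t : ℤ)))]
    have hevalM : M.eval (ω ^ t) = ∏ i ∈ Finset.Icc 1 m, ((ω ^ t) - d i) := by
      simp [hMdef, eval_prod]
    have hexp : R.eval (ω ^ t)
        = L * (M.eval (ω ^ t)) - L * ((ω ^ t) ^ m) + L - A.eval (ω ^ t) := by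
      simp [hRdef, mul_sub]
    rw [hexp, hevalM, hym, hA', hprod1, hprod2]
    ring
  -- R is the zero polynomial
  have hR0 : R = 0 := by
    apply Polynomial.eq_zero_of_natDegree_lt_card_of_eval_eq_zero' R
      ((Finset.range m).image fun t => ω ^ t)
    · intro y hy
      obtain ⟨t, _, rfl⟩ := Finset.mem_image.mp hy
      exact heval t
    · rw [Finset.card_image_of_injOn, Finset.card_range]
      · exact hRdeg
      · intro a ha c hc hac
        exact hω.pow_inj (Finset.mem_range.mp ha) (Finset.mem_range.mp hc) hac
  -- evaluate at 1 + x
  have hM1x : M.eval (1 + x) = 0 := by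
    rw [hMdef, eval_prod]
    apply Finset.prod_eq_zero (Finset.mem_Icc.mpr ⟨hm, le_refl m⟩)
    simp only [eval_sub, eval_X, eval_C]
    have hdm : d m = x + 1 := by
      simp only [hddef]
      have h1 : ω ^ (-(k * m : ℤ)) = 1 := by
        rw [hcong (-(k * m : ℤ)) 0 ⟨-(k : ℤ), by push_cast; ring⟩, zpow_zero]
      have h2 : ω ^ (((k : ℤ) - 1) * m) = 1 := by
        rw [hcong (((k : ℤ) - 1) * m) 0 ⟨(k : ℤ) - 1, by push_cast; ring⟩, zpow_zero]
      rw [h1, h2]; ring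
    rw [hdm]; ring
  have hfinal : (∑ j ∈ Finset.Icc 1 m, b j * x ^ j * (1 + x) ^ (r j))
      = -L * ((x + 1) ^ m - 1) := by
    have h0 : R.eval (1 + x) = 0 := by rw [hR0]; simp
    have hexp : R.eval (1 + x)
        = L * (M.eval (1 + x)) - L * ((1 + x) ^ m) + L - A.eval (1 + x) := by
      simp [hRdef, mul_sub]
    have hAev : A.eval (1 + x)
        = ∑ j ∈ Finset.Icc 1 m, b j * x ^ j * (1 + x) ^ (r j) := by
      simp only [hAdef, eval_finset_sum, eval_mul, eval_C, eval_pow, eval_X]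
    rw [hexp, hM1x, hAev] at h0
    have : (1 + x) ^ m = (x + 1) ^ m := by ring
    rw [this] at h0
    linear_combination -h0
  -- Gauss sum
  have hcard : #(Finset.Icc 1 m) = m := by rw [Nat.card_Icc]; omega
  set Snat : ℕ := ∑ i ∈ Finset.Icc 1 m, i with hSdef
  have hS2 : Snat * 2 = m * (m + 1) := by
    have hg := Finset.sum_range_id_mul_two (m + 1)
    have h1 : ∑ i ∈ Finset.range (m + 1), i = Snat := by
      rw [Finset.sum_range_succ' (fun i => i) m, hSdef, ← Finset.Ico_add_one_right_eq_Icc,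
        Finset.sum_Ico_eq_sum_range]
      simp [Nat.add_comm]
    rw [h1] at hg
    simp only [Nat.add_sub_cancel] at hg
    rw [hg]; ring
  have hLval : L = (-1 : ℂ) ^ m * (ω ^ Snat) ^ (1 - (k : ℤ)) := by
    have hScast : ((Snat : ℕ) : ℤ) = ∑ i ∈ Finset.Icc 1 m, (i : ℤ) := by
      rw [hSdef]; push_cast; rfl
    have h1 : ∀ i ∈ Finset.Icc 1 m, -(ω ^ ((1 - (k : ℤ)) * i))
        = (-1) * ω ^ ((1 - (k : ℤ)) * i) := fun i _ => by ring
    rw [hLdef, Finset.prod_congr rfl h1, Finset.prod_mul_distrib, Finset.prod_const, hcard,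
      zpow_sum_aux ω hω0, ← Finset.mul_sum, zpow_mul', ← zpow_natCast ω Snat, hScast]
  have hsign : (-1 : ℂ) ^ (k * (m - 1)) * (-L) = 1 := by
    rcases Nat.even_or_odd m with hme | hmo
    · -- m even
      obtain ⟨e, he⟩ := hme
      have he1 : 1 ≤ e := by omega
      have hu2 : ((ω : ℂ) ^ e) ^ 2 = 1 := by
        rw [← pow_mul, show e * 2 = m by omega, hωm]
      have hune : (ω : ℂ) ^ e ≠ 1 := hω.pow_ne_one_of_pos_of_lt (by omega) (by omega)
      have hu : (ω : ℂ) ^ e = -1 := by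
        have h3 : ((ω : ℂ) ^ e - 1) * ((ω : ℂ) ^ e + 1) = 0 := by linear_combination hu2
        rcases mul_eq_zero.mp h3 with h4 | h4
        · exact absurd (by linear_combination h4) hune
        · linear_combination h4
      have hSval : Snat = e * (m + 1) := by
        refine Nat.eq_of_mul_eq_mul_right (by norm_num) (hS2.trans ?_)
        rw [he]; ring
      have hwval : (ω : ℂ) ^ Snat = -1 := by
        rw [hSval, pow_mul, hu]
        exact Odd.neg_one_pow ⟨e, by omega⟩
      have h7 : (-1 : ℂ) ^ m = 1 := Even.neg_one_pow ⟨e, he⟩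
      rcases Nat.even_or_odd k with hke | hko
      · obtain ⟨c, hc⟩ := hke
        have h6 : (-1 : ℂ) ^ (1 - (k : ℤ)) = -1 :=
          Odd.neg_one_zpow ⟨-(c : ℤ), by omega⟩
        have h8 : (-1 : ℂ) ^ (k * (m - 1)) = 1 :=
          Even.neg_one_pow (Nat.even_mul.mpr (Or.inl ⟨c, hc⟩))
        rw [hLval, hwval, h6, h7, h8]; ring
      · obtain ⟨c, hc⟩ := hko
        have h6 : (-1 : ℂ) ^ (1 - (k : ℤ)) = 1 :=
          Even.neg_one_zpow ⟨-(c : ℤ), by omega⟩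
        have h8 : (-1 : ℂ) ^ (k * (m - 1)) = -1 :=
          Odd.neg_one_pow (Nat.odd_mul.mpr ⟨⟨c, hc⟩, ⟨e - 1, by omega⟩⟩)
        rw [hLval, hwval, h6, h7, h8]; ring
    · -- m odd
      obtain ⟨e, he⟩ := hmo
      have hSval : Snat = m * (e + 1) := by
        refine Nat.eq_of_mul_eq_mul_right (by norm_num) (hS2.trans ?_)
        rw [show m + 1 = (e + 1) * 2 by omega]; ring
      have hwval : (ω : ℂ) ^ Snat = 1 := by rw [hSval, pow_mul, hωm, one_pow]
      have h7 : (-1 : ℂ) ^ m = -1 := Odd.neg_one_pow ⟨e, he⟩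
      have h8 : (-1 : ℂ) ^ (k * (m - 1)) = 1 :=
        Even.neg_one_pow (Nat.even_mul.mpr (Or.inr ⟨e, by omega⟩))
      rw [hLval, hwval, one_zpow, h7, h8]; ring
  calc (-1 : ℂ) ^ (k * (m - 1)) * ∑ j ∈ Finset.Icc 1 m,
        b j * x ^ j * (1 + x) ^ ((-(k * j : ℤ)) % (m : ℤ)).toNat
      = (-1 : ℂ) ^ (k * (m - 1)) * ∑ j ∈ Finset.Icc 1 m, b j * x ^ j * (1 + x) ^ (r j) := rfl
    _ = (-1 : ℂ) ^ (k * (m - 1)) * (-L * ((x + 1) ^ m - 1)) := by rw [hfinal]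
    _ = ((-1 : ℂ) ^ (k * (m - 1)) * (-L)) * ((x + 1) ^ m - 1) := by ring
    _ = (x + 1) ^ m - 1 := by rw [hsign, one_mul]
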